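/- For all 1 ≤ u, v ≤ ∞, all 2 ≤ r ≤ ∞ and all n: n^{1/r} ≤ π_{r,2}(id: S_u^n → S_v^n); consequently, for all 2 ≤ s ≤ ∞: n^{1/2 − 1/s} ≤ μ_{s,2}(id: S_u^n → S_v^n). -/

import Mathlib

open scoped ENNReal NNReal BigOperators
open Filter

noncomputable section

/-- The ℓ^r-"sum" `(∑ |v i|^r)^(1/r)` of finitely many reals, with the
supremum `sup_i |v i|` for `r = ∞`. -/
def lpsum (r : ℝ≥0∞) {m : ℕ} (v : Fin m → ℝ) : ℝ :=
  if r = ∞ then ⨆ i, |v i| else (∑ i, |v i| ^ r.toReal) ^ (1 / r.toReal)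

/-- The norm of `ℓ_u^n = (ℂ^n, ‖·‖_u)` (max-norm for `u = ∞`). -/
def lunorm (u : ℝ≥0∞) {n : ℕ} (x : Fin n → ℂ) : ℝ :=
  lpsum u fun i => ‖x i‖

/-- Dual norm of a linear functional with respect to a given norm function. -/
def dualNorm {X : Type*} [AddCommGroup X] [Module ℂ X] (NX : X → ℝ) (f : X →ₗ[ℂ] ℂ) : ℝ :=
  sSup {t | ∃ x, NX x ≤ 1 ∧ t = ‖f x‖}

/-- Operator norm of a linear map with respect to given norm functions. -/
def opNorm {X Y : Type*} [AddCommGroup X] [Module ℂ X] [AddCommGroup Y] [Module ℂ Y]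
    (NX : X → ℝ) (NY : Y → ℝ) (T : X →ₗ[ℂ] Y) : ℝ :=
  sSup {t | ∃ x, NX x ≤ 1 ∧ t = NY (T x)}

/-- The weak-ℓ₂ norm `sup_{‖x'‖ ≤ 1} (∑_j |⟨x', x_j⟩|²)^{1/2}` of a finite family. -/
def weak2 {X : Type*} [AddCommGroup X] [Module ℂ X] (NX : X → ℝ) {m : ℕ}
    (x : Fin m → X) : ℝ :=
  sSup {t | ∃ f : X →ₗ[ℂ] ℂ, dualNorm NX f ≤ 1 ∧ t = lpsum 2 fun j => ‖f (x j)‖}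

/-- The (r,2)-summing norm `π_{r,2}(T)`: the least `ρ ≥ 0` such that
`(∑ ‖T x_i‖^r)^{1/r} ≤ ρ · sup_{‖x'‖ ≤ 1} (∑ |⟨x', x_i⟩|²)^{1/2}`
for all finite families, with sup-modification for `r = ∞`. -/
def summingNorm (r : ℝ≥0∞) {X Y : Type*} [AddCommGroup X] [Module ℂ X]
    [AddCommGroup Y] [Module ℂ Y] (NX : X → ℝ) (NY : Y → ℝ) (T : X →ₗ[ℂ] Y) : ℝ :=
  sInf {ρ | 0 ≤ ρ ∧ ∀ (m : ℕ) (x : Fin m → X),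
    lpsum r (fun i => NY (T (x i))) ≤ ρ * weak2 NX x}

/-- The (s,2)-mixing norm `μ_{s,2}(T)`: the least `c ≥ 0` such that
`(∑_j (∑_i |⟨y'_i, T x_j⟩|^s)^{2/s})^{1/2} ≤ c · (∑_i ‖y'_i‖^s)^{1/s} ·
 sup_{‖x'‖ ≤ 1} (∑_j |⟨x', x_j⟩|²)^{1/2}` for all finite families, with
sup-modification for `s = ∞`. -/
def mixingNorm (s : ℝ≥0∞) {X Y : Type*} [AddCommGroup X] [Module ℂ X]
    [AddCommGroup Y] [Module ℂ Y] (NX : X → ℝ) (NY : Y → ℝ) (T : X →ₗ[ℂ] Y) : ℝ :=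
  sInf {c | 0 ≤ c ∧ ∀ (k m : ℕ) (y : Fin k → (Y →ₗ[ℂ] ℂ)) (x : Fin m → X),
    lpsum 2 (fun j => lpsum s fun i => ‖(y i) (T (x j))‖) ≤
      c * lpsum s (fun i => dualNorm NY (y i)) * weak2 NX x}

/-- The infinite-dimensional complex Hilbert sequence space ℓ₂. -/
abbrev ellTwo : Type := lp (fun _ : ℕ => ℂ) 2

/-- The k-th approximation number `a_k(T) = inf{‖T - R‖ : rank R < k}`. -/
def approxNum {X Y : Type*} [AddCommGroup X] [Module ℂ X] [AddCommGroup Y] [Module ℂ Y]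
    (NX : X → ℝ) (NY : Y → ℝ) (k : ℕ) (T : X →ₗ[ℂ] Y) : ℝ :=
  sInf {t | ∃ R : X →ₗ[ℂ] Y, Module.rank ℂ (LinearMap.range R) < (k : Cardinal) ∧
    t = opNorm NX NY (T - R)}

/-- The k-th Weyl number `x_k(T) = sup{a_k(T S) : S ∈ L(ℓ₂, X), ‖S‖ ≤ 1}`. -/
def weylNum {X Y : Type*} [AddCommGroup X] [Module ℂ X] [AddCommGroup Y] [Module ℂ Y]
    (NX : X → ℝ) (NY : Y → ℝ) (k : ℕ) (T : X →ₗ[ℂ] Y) : ℝ :=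
  sSup {t | ∃ S : ellTwo →ₗ[ℂ] X, opNorm (fun z => ‖z‖) NX S ≤ 1 ∧
    t = approxNum (fun z => ‖z‖) NY k (T ∘ₗ S)}

/-- The singular values of a complex n×n matrix. -/
def singularValues {n : ℕ} (A : Matrix (Fin n) (Fin n) ℂ) : Fin n → ℝ := fun i =>
  Real.sqrt ((Matrix.isHermitian_conjTranspose_mul_self A).eigenvalues i)

/-- The Schatten-u norm `‖A‖_{S_u^n} = (∑ s_i(A)^u)^{1/u}` (operator norm for u = ∞). -/
def schattenNorm (u : ℝ≥0∞) {n : ℕ} (A : Matrix (Fin n) (Fin n) ℂ) : ℝ :=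
  lpsum u (singularValues A)

/-- A symmetric Banach sequence space: a Banach space `E ⊆ c₀` of complex sequences
in which the standard unit vectors form a symmetric (Schauder) basis. -/
structure SymmSeqSpace where
  /-- membership in E -/
  Mem : (ℕ → ℂ) → Prop
  /-- the norm of E -/
  nrm : (ℕ → ℂ) → ℝ
  zero_mem : Mem 0
  add_mem : ∀ {x y}, Mem x → Mem y → Mem (x + y)
  smul_mem : ∀ (c : ℂ) {x}, Mem x → Mem (c • x)
  /-- E ⊆ c₀ -/
  tendsto_zero : ∀ {x}, Mem x → Filter.Tendsto x Filter.atTop (nhds 0)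
  nrm_nonneg : ∀ x, 0 ≤ nrm x
  nrm_eq_zero : ∀ {x}, Mem x → (nrm x = 0 ↔ x = 0)
  nrm_add_le : ∀ {x y}, Mem x → Mem y → nrm (x + y) ≤ nrm x + nrm y
  nrm_smul : ∀ (c : ℂ) (x), nrm (c • x) = ‖c‖ * nrm x
  /-- the unit vectors belong to E -/
  unit_mem : ∀ i : ℕ, Mem (Pi.single i 1)
  /-- symmetry of the basis: permutations and unimodular sign changes are isometric -/
  symm_mem : ∀ {x} (π : Equiv.Perm ℕ) (ε : ℕ → ℂ), (∀ i, ‖ε i‖ = 1) → Mem x →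
    Mem (fun i => ε i * x (π i))
  symm : ∀ (x : ℕ → ℂ) (π : Equiv.Perm ℕ) (ε : ℕ → ℂ), (∀ i, ‖ε i‖ = 1) →
    nrm (fun i => ε i * x (π i)) = nrm x
  /-- the unit vectors form a Schauder basis: finite sections converge -/
  basis : ∀ {x}, Mem x → Filter.Tendsto
    (fun n => nrm (x - fun i => if i < n then x i else 0)) Filter.atTop (nhds 0)
  /-- completeness -/
  complete : ∀ f : ℕ → (ℕ → ℂ), (∀ k, Mem (f k)) →
    (∀ ε > (0:ℝ), ∃ N, ∀ p q, N ≤ p → N ≤ q → nrm (f p - f q) < ε) →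
    ∃ x, Mem x ∧ Filter.Tendsto (fun k => nrm (f k - x)) Filter.atTop (nhds 0)

/-- The norm of the n-th section `E_n = span{e_1,…,e_n}` of E, as a norm on ℂ^n. -/
def SymmSeqSpace.nrmFin (E : SymmSeqSpace) {n : ℕ} (x : Fin n → ℂ) : ℝ :=
  E.nrm fun i => if h : i < n then x ⟨i, h⟩ else 0

/-- The unitary-ideal norm `‖A‖_{S_E^n} = ‖(s_i(A))‖_{E_n}`. -/
def SymmSeqSpace.schatten (E : SymmSeqSpace) {n : ℕ} (A : Matrix (Fin n) (Fin n) ℂ) : ℝ :=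
  E.nrmFin fun i => ((singularValues A i : ℝ) : ℂ)

/-- p-convexity of a symmetric Banach sequence space (`p = ∞` allowed). -/
def pConvex (E : SymmSeqSpace) (p : ℝ≥0∞) : Prop :=
  ∃ M > (0:ℝ), ∀ (m : ℕ) (x : Fin m → (ℕ → ℂ)), (∀ i, E.Mem (x i)) →
    E.nrm (fun j => ((lpsum p fun i => ‖x i j‖ : ℝ) : ℂ)) ≤ M * lpsum p fun i => E.nrm (x i)

/-- q-concavity of a symmetric Banach sequence space (`q = ∞` allowed). -/
def qConcave (E : SymmSeqSpace) (q : ℝ≥0∞) : Prop :=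
  ∃ M > (0:ℝ), ∀ (m : ℕ) (x : Fin m → (ℕ → ℂ)), (∀ i, E.Mem (x i)) →
    lpsum q (fun i => E.nrm (x i)) ≤ M * E.nrm (fun j => ((lpsum q fun i => ‖x i j‖ : ℝ) : ℂ))

/-- The complexification of a real n×n matrix, acting linearly on ℂ^n. -/
def mapC {n : ℕ} (g : Matrix (Fin n) (Fin n) ℝ) : (Fin n → ℂ) →ₗ[ℂ] (Fin n → ℂ) :=
  (g.map (Complex.ofReal)).mulVecLin

/-- `N` is a norm on ℂ^n. -/
def IsNorm {n : ℕ} (N : (Fin n → ℂ) → ℝ) : Prop :=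
  (∀ x, N x = 0 ↔ x = 0) ∧ (∀ (c : ℂ) x, N (c • x) = ‖c‖ * N x) ∧
    ∀ x y, N (x + y) ≤ N x + N y

/-- `(ℂ^n, N)` has enough symmetries in the orthogonal group O(n): there is a compact
subgroup `G ⊆ O(n)` acting isometrically on `L(ℂ^n, N)` by left and right composition
such that every operator commuting with `G` is a multiple of the identity. -/
def HasEnoughSymmetries {n : ℕ} (N : (Fin n → ℂ) → ℝ) : Prop :=
  ∃ G : Set (Matrix (Fin n) (Fin n) ℝ),
    (∀ g ∈ G, g * g.transpose = 1 ∧ g.transpose * g = 1) ∧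
    (1 : Matrix (Fin n) (Fin n) ℝ) ∈ G ∧
    (∀ g ∈ G, ∀ g' ∈ G, g * g' ∈ G) ∧ (∀ g ∈ G, g.transpose ∈ G) ∧
    IsCompact G ∧
    (∀ u : (Fin n → ℂ) →ₗ[ℂ] (Fin n → ℂ), ∀ g ∈ G, ∀ g' ∈ G,
      opNorm N N (mapC g ∘ₗ u ∘ₗ mapC g') = opNorm N N u) ∧
    (∀ u : (Fin n → ℂ) →ₗ[ℂ] (Fin n → ℂ),
      (∀ g ∈ G, u ∘ₗ mapC g = mapC g ∘ₗ u) → ∃ c : ℂ, u = c • LinearMap.id)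

end

noncomputable section

namespace Aux

lemma lpsum_nonneg (r : ℝ≥0∞) {m : ℕ} (v : Fin m → ℝ) : 0 ≤ lpsum r v := by
  unfold lpsum
  split
  · exact Real.iSup_nonneg fun i => abs_nonneg _
  · exact Real.rpow_nonneg (Finset.sum_nonneg fun i _ =>
      Real.rpow_nonneg (abs_nonneg _) _) _

lemma lpsum_mono (r : ℝ≥0∞) {m : ℕ} {v w : Fin m → ℝ} (h : ∀ i, |v i| ≤ |w i|) :
    lpsum r v ≤ lpsum r w := by
  unfold lpsum
  split
  · rcases Nat.eq_zero_or_pos m with hm | hm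
    · subst hm
      simp [Real.iSup_of_isEmpty]
    · exact ciSup_mono (Set.Finite.bddAbove (Set.finite_range _)) h
  · apply Real.rpow_le_rpow (Finset.sum_nonneg fun i _ =>
      Real.rpow_nonneg (abs_nonneg _) _)
    · exact Finset.sum_le_sum fun i _ => Real.rpow_le_rpow (abs_nonneg _) (h i)
        ENNReal.toReal_nonneg
    · positivity

lemma le_lpsum (r : ℝ≥0∞) (hr : r ≠ 0) {m : ℕ} (v : Fin m → ℝ) (i : Fin m) :
    |v i| ≤ lpsum r v := by
  unfold lpsum
  split
  · exact le_ciSup (Set.Finite.bddAbove (Set.finite_range (fun j : Fin m => |v j|))) i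
  · rename_i hinf
    have hp : 0 < r.toReal := ENNReal.toReal_pos hr hinf
    calc |v i| = (|v i| ^ r.toReal) ^ (1 / r.toReal) := by
          rw [← Real.rpow_mul (abs_nonneg _), mul_one_div_cancel hp.ne', Real.rpow_one]
      _ ≤ _ := by
          apply Real.rpow_le_rpow (Real.rpow_nonneg (abs_nonneg _) _)
          · exact Finset.single_le_sum (fun j _ => Real.rpow_nonneg (abs_nonneg _) _)
              (Finset.mem_univ i)
          · positivity

lemma lpsum_smul (r : ℝ≥0∞) (hr : r ≠ 0) {m : ℕ} (a : ℝ) (ha : 0 ≤ a) (v : Fin m → ℝ) :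
    lpsum r (fun i => a * v i) = a * lpsum r v := by
  unfold lpsum
  split
  · rcases Nat.eq_zero_or_pos m with hm | hm
    · subst hm
      simp [Real.iSup_of_isEmpty]
    · have : ∀ i : Fin m, |a * v i| = a * |v i| := fun i => by
        rw [abs_mul, abs_of_nonneg ha]
      simp_rw [this]
      have : Nonempty (Fin m) := ⟨⟨0, hm⟩⟩
      exact (Real.mul_iSup_of_nonneg ha fun i => |v i|).symm
  · rename_i hinf
    have hp : 0 < r.toReal := ENNReal.toReal_pos hr hinf
    have : ∀ i : Fin m, |a * v i| ^ r.toReal = a ^ r.toReal * |v i| ^ r.toReal := fun i => by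
      rw [abs_mul, abs_of_nonneg ha, Real.mul_rpow ha (abs_nonneg _)]
    simp_rw [this, ← Finset.mul_sum]
    rw [Real.mul_rpow (Real.rpow_nonneg ha _) (Finset.sum_nonneg fun i _ =>
      Real.rpow_nonneg (abs_nonneg _) _), ← Real.rpow_mul ha,
      mul_one_div_cancel hp.ne', Real.rpow_one]

lemma lpsum_const_one (r : ℝ≥0∞) {n : ℕ} (hn : 0 < n) :
    lpsum r (fun _ : Fin n => 1) = (n : ℝ) ^ (1 / r.toReal) := by
  have : Nonempty (Fin n) := ⟨⟨0, hn⟩⟩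
  unfold lpsum
  split
  · rename_i h
    subst h
    simp [ciSup_const]
  · simp only [abs_one, Real.one_rpow, Finset.sum_const, Finset.card_univ,
      Fintype.card_fin, nsmul_eq_mul, mul_one]

lemma lpsum_ite (r : ℝ≥0∞) (hr : r ≠ 0) {m : ℕ} (i₀ : Fin m) (c : ℝ) (hc : 0 ≤ c) :
    lpsum r (fun i => if i = i₀ then c else 0) = c := by
  have : Nonempty (Fin m) := ⟨i₀⟩
  unfold lpsum
  split
  · apply le_antisymm
    · apply ciSup_le
      intro i
      by_cases h : i = i₀ <;> simp [h, abs_of_nonneg hc, hc]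
    · calc c = |if i₀ = i₀ then c else 0| := by simp [abs_of_nonneg hc]
        _ ≤ _ := le_ciSup (f := fun i => |if i = i₀ then c else 0|)
          (Set.Finite.bddAbove (Set.finite_range _)) i₀
  · rename_i hinf
    have hp : 0 < r.toReal := ENNReal.toReal_pos hr hinf
    have : ∀ i : Fin m, |if i = i₀ then c else 0| ^ r.toReal
        = if i = i₀ then c ^ r.toReal else 0 := fun i => by
      by_cases h : i = i₀ <;> simp [h, abs_of_nonneg hc, Real.zero_rpow hp.ne']
    simp_rw [this, Finset.sum_ite_eq' Finset.univ i₀ fun _ => c ^ r.toReal,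
      if_pos (Finset.mem_univ i₀)]
    rw [← Real.rpow_mul hc, mul_one_div_cancel hp.ne', Real.rpow_one]

lemma lpsum_two_eq_sqrt {m : ℕ} (v : Fin m → ℝ) :
    lpsum 2 v = Real.sqrt (∑ i, (v i) ^ 2) := by
  unfold lpsum
  rw [if_neg (by norm_num)]
  have h2 : ((2 : ℝ≥0∞)).toReal = (2 : ℝ) := by norm_num
  rw [h2, Real.sqrt_eq_rpow]
  congr 1
  refine Finset.sum_congr rfl fun i _ => ?_
  have : |v i| ^ (2:ℝ) = |v i| ^ (2:ℕ) := by
    rw [← Real.rpow_natCast]; norm_num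
  rw [this, sq_abs]


lemma sum_rpow_anti {m : ℕ} (w : Fin m → ℝ) (hw : ∀ i, 0 ≤ w i) {p q : ℝ}
    (hp : 0 < p) (hpq : p ≤ q) :
    (∑ i, w i ^ q) ^ (1/q) ≤ (∑ i, w i ^ p) ^ (1/p) := by
  have hq : 0 < q := lt_of_lt_of_le hp hpq
  set S : ℝ := (∑ i, w i ^ p) ^ (1/p) with hS
  have hS0 : 0 ≤ S := Real.rpow_nonneg (Finset.sum_nonneg fun i _ =>
    Real.rpow_nonneg (hw i) _) _
  have hwS : ∀ i, w i ≤ S := by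
    intro i
    calc w i = (w i ^ p) ^ (1/p) := by
          rw [← Real.rpow_mul (hw i), mul_one_div_cancel hp.ne', Real.rpow_one]
      _ ≤ S := by
          apply Real.rpow_le_rpow (Real.rpow_nonneg (hw i) _)
          · exact Finset.single_le_sum (fun j _ => Real.rpow_nonneg (hw j) _)
              (Finset.mem_univ i)
          · positivity
  have hSp : S ^ p = ∑ i, w i ^ p := by
    rw [hS, ← Real.rpow_mul (Finset.sum_nonneg fun i _ => Real.rpow_nonneg (hw i) _),
      one_div_mul_cancel hp.ne', Real.rpow_one]
  rcases eq_or_lt_of_le hS0 with h0 | hSpos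
  · have : ∀ i, w i = 0 := fun i => le_antisymm (h0 ▸ hwS i) (hw i)
    simp only [this, Real.zero_rpow hq.ne']
    rw [Finset.sum_const, smul_zero, Real.zero_rpow (by positivity : (1/q) ≠ 0)]
    exact hS0
  · have key : ∑ i, w i ^ q ≤ S ^ q := by
      calc ∑ i, w i ^ q ≤ ∑ i, w i ^ p * S ^ (q - p) := by
            apply Finset.sum_le_sum
            intro i _
            calc w i ^ q = w i ^ p * w i ^ (q - p) := by
                  have hpq' : p + (q - p) = q := by ring
                  rw [← hpq', Real.rpow_add' (hw i) (by rw [hpq']; exact hq.ne')]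
                  ring_nf
              _ ≤ w i ^ p * S ^ (q - p) := by
                  apply mul_le_mul_of_nonneg_left _ (Real.rpow_nonneg (hw i) _)
                  exact Real.rpow_le_rpow (hw i) (hwS i) (by linarith)
        _ = S ^ p * S ^ (q - p) := by rw [← Finset.sum_mul, hSp]
        _ = S ^ q := by rw [← Real.rpow_add hSpos]; ring_nf
    calc (∑ i, w i ^ q) ^ (1/q) ≤ (S ^ q) ^ (1/q) :=
          Real.rpow_le_rpow (Finset.sum_nonneg fun i _ => Real.rpow_nonneg (hw i) _)
            key (by positivity)
      _ = S := by rw [← Real.rpow_mul hS0, mul_one_div_cancel hq.ne', Real.rpow_one]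

lemma lpsum_le_sum (r : ℝ≥0∞) (hr : 1 ≤ r) {m : ℕ} (v : Fin m → ℝ) :
    lpsum r v ≤ ∑ i, |v i| := by
  unfold lpsum
  split
  · rcases Nat.eq_zero_or_pos m with hm | hm
    · subst hm; simp [Real.iSup_of_isEmpty]
    · have : Nonempty (Fin m) := ⟨⟨0, hm⟩⟩
      exact ciSup_le fun i => Finset.single_le_sum (f := fun j => |v j|)
        (fun j _ => abs_nonneg _) (Finset.mem_univ i)
  · rename_i hinf
    have hp : 1 ≤ r.toReal := by
      have := ENNReal.toReal_mono hinf hr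
      simpa using this
    have := sum_rpow_anti (fun i => |v i|) (fun i => abs_nonneg _)
      (p := 1) (q := r.toReal) one_pos hp
    simpa using this

lemma lpsum_le_lpsum_two (r : ℝ≥0∞) (hr : 2 ≤ r) {m : ℕ} (v : Fin m → ℝ) :
    lpsum r v ≤ lpsum 2 v := by
  have h2 : lpsum 2 v = (∑ i, |v i| ^ (2:ℝ)) ^ (1/(2:ℝ)) := by
    unfold lpsum
    rw [if_neg (by norm_num)]
    norm_num
  rw [h2]
  unfold lpsum
  split
  · rcases Nat.eq_zero_or_pos m with hm | hm
    · subst hm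
      simp only [Real.iSup_of_isEmpty]
      positivity
    · have : Nonempty (Fin m) := ⟨⟨0, hm⟩⟩
      apply ciSup_le
      intro i
      calc |v i| = (|v i| ^ (2:ℝ)) ^ (1/(2:ℝ)) := by
            rw [← Real.rpow_mul (abs_nonneg _)]; norm_num
        _ ≤ _ := by
            apply Real.rpow_le_rpow (Real.rpow_nonneg (abs_nonneg _) _)
            · exact Finset.single_le_sum (fun j _ => Real.rpow_nonneg (abs_nonneg _) _)
                (Finset.mem_univ i)
            · norm_num
  · rename_i hinf
    have hp : (2:ℝ) ≤ r.toReal := by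
      have := ENNReal.toReal_mono hinf hr
      simpa using this
    exact sum_rpow_anti (fun i => |v i|) (fun i => abs_nonneg _) two_pos hp

open Matrix in
lemma star_mul_self_unitary {n : ℕ} {M : Matrix (Fin n) (Fin n) ℂ} (hM : M.IsHermitian) :
    star (hM.eigenvectorUnitary : Matrix (Fin n) (Fin n) ℂ) *
      (hM.eigenvectorUnitary : Matrix (Fin n) (Fin n) ℂ) = 1 :=
  (Matrix.mem_unitaryGroup_iff').mp hM.eigenvectorUnitary.2

open Matrix in
lemma mul_star_self_unitary {n : ℕ} {M : Matrix (Fin n) (Fin n) ℂ} (hM : M.IsHermitian) :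
    (hM.eigenvectorUnitary : Matrix (Fin n) (Fin n) ℂ) *
      star (hM.eigenvectorUnitary : Matrix (Fin n) (Fin n) ℂ) = 1 :=
  (Matrix.mem_unitaryGroup_iff).mp hM.eigenvectorUnitary.2

lemma trace_eq_sum_eigen {n : ℕ} {M : Matrix (Fin n) (Fin n) ℂ} (hM : M.IsHermitian) :
    M.trace = ∑ i, ((hM.eigenvalues i : ℝ) : ℂ) := by
  conv_lhs => rw [hM.spectral_theorem, Unitary.conjStarAlgAut_apply]
  rw [Matrix.trace_mul_cycle, star_mul_self_unitary hM, Matrix.one_mul, Matrix.trace_diagonal]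
  rfl

lemma trace_sq_eq_sum_eigen_sq {n : ℕ} {M : Matrix (Fin n) (Fin n) ℂ} (hM : M.IsHermitian) :
    (M * M).trace = ∑ i, ((hM.eigenvalues i : ℝ) : ℂ) * ((hM.eigenvalues i : ℝ) : ℂ) := by
  set U : Matrix (Fin n) (Fin n) ℂ := (hM.eigenvectorUnitary : Matrix (Fin n) (Fin n) ℂ) with hU
  set D : Matrix (Fin n) (Fin n) ℂ :=
    Matrix.diagonal (RCLike.ofReal ∘ hM.eigenvalues) with hD
  have hspec : M = U * D * star U := hM.spectral_theorem
  have hsU : star U * U = 1 := star_mul_self_unitary hM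
  conv_lhs => rw [hspec]
  rw [show U * D * star U * (U * D * star U) = U * D * (star U * U) * (D * star U) from by
    simp only [Matrix.mul_assoc], hsU, Matrix.mul_one,
    Matrix.trace_mul_comm,
    show D * star U * (U * D) = D * (star U * U) * D from by simp only [Matrix.mul_assoc],
    hsU, Matrix.mul_one, Matrix.diagonal_mul_diagonal, Matrix.trace_diagonal]
  rfl

lemma diag_re_le {n : ℕ} {M : Matrix (Fin n) (Fin n) ℂ} (hM : M.IsHermitian) {b : ℝ}
    (hev : ∀ i, hM.eigenvalues i ≤ b) (l : Fin n) : (M l l).re ≤ b := by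
  set U : Matrix (Fin n) (Fin n) ℂ := (hM.eigenvectorUnitary : Matrix (Fin n) (Fin n) ℂ) with hU
  have hrow : ∑ i, Complex.normSq (U l i) = 1 := by
    have h := congrArg (fun A : Matrix (Fin n) (Fin n) ℂ => (A l l).re)
      (mul_star_self_unitary hM)
    simp only [Matrix.mul_apply, Matrix.star_apply, Matrix.one_apply_eq, Complex.one_re,
      Complex.star_def, Complex.mul_conj, Complex.re_sum, Complex.ofReal_re] at h
    exact h
  have hMll : (M l l).re = ∑ i, hM.eigenvalues i * Complex.normSq (U l i) := by
    conv_lhs => rw [hM.spectral_theorem, Unitary.conjStarAlgAut_apply]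
    simp only [Matrix.mul_apply, Matrix.diagonal_apply, Matrix.star_apply, Complex.star_def,
      Complex.re_sum, mul_ite, mul_zero, Finset.sum_ite_eq', Finset.mem_univ, if_true,
      Function.comp_apply]
    refine Finset.sum_congr rfl fun i _ => ?_
    have : U l i * (RCLike.ofReal (hM.eigenvalues i) : ℂ) * (starRingEnd ℂ) (U l i)
        = ((hM.eigenvalues i * Complex.normSq (U l i) : ℝ) : ℂ) := by
      rw [mul_comm (U l i) _, mul_assoc, Complex.mul_conj]
      push_cast
      rfl
    rw [this, Complex.ofReal_re]
  rw [hMll]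
  calc ∑ i, hM.eigenvalues i * Complex.normSq (U l i)
      ≤ ∑ i, b * Complex.normSq (U l i) :=
        Finset.sum_le_sum fun i _ =>
          mul_le_mul_of_nonneg_right (hev i) (Complex.normSq_nonneg _)
    _ = b := by rw [← Finset.mul_sum, hrow, mul_one]

lemma lpsum_zero (r : ℝ≥0∞) (hr : r ≠ 0) {m : ℕ} : lpsum r (fun _ : Fin m => (0:ℝ)) = 0 := by
  unfold lpsum
  split
  · rcases Nat.eq_zero_or_pos m with hm | hm
    · subst hm; simp [Real.iSup_of_isEmpty]
    · have : Nonempty (Fin m) := ⟨⟨0, hm⟩⟩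
      simp [ciSup_const]
  · rename_i hinf
    have hp : 0 < r.toReal := ENNReal.toReal_pos hr hinf
    simp [Real.zero_rpow hp.ne', Real.zero_rpow (inv_ne_zero hp.ne')]

open scoped ComplexOrder in
lemma eigen_nonneg {n : ℕ} (A : Matrix (Fin n) (Fin n) ℂ) (i : Fin n) :
    0 ≤ (Matrix.isHermitian_conjTranspose_mul_self A).eigenvalues i :=
  (Matrix.posSemidef_conjTranspose_mul_self A).eigenvalues_nonneg i

lemma singularValues_nonneg {n : ℕ} (A : Matrix (Fin n) (Fin n) ℂ) (i : Fin n) :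
    0 ≤ singularValues A i := Real.sqrt_nonneg _

lemma sq_singularValues {n : ℕ} (A : Matrix (Fin n) (Fin n) ℂ) (i : Fin n) :
    singularValues A i ^ 2 = (Matrix.isHermitian_conjTranspose_mul_self A).eigenvalues i :=
  Real.sq_sqrt (eigen_nonneg A i)

lemma schattenNorm_nonneg (u : ℝ≥0∞) {n : ℕ} (A : Matrix (Fin n) (Fin n) ℂ) :
    0 ≤ schattenNorm u A := lpsum_nonneg u _

lemma singularValue_le_schattenNorm {u : ℝ≥0∞} (hu : u ≠ 0) {n : ℕ}
    (A : Matrix (Fin n) (Fin n) ℂ) (i : Fin n) :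
    singularValues A i ≤ schattenNorm u A := by
  have := le_lpsum u hu (singularValues A) i
  rwa [abs_of_nonneg (singularValues_nonneg A i)] at this

lemma sum_eigen_eq {n : ℕ} (A : Matrix (Fin n) (Fin n) ℂ) :
    ∑ i, (Matrix.isHermitian_conjTranspose_mul_self A).eigenvalues i
      = ∑ k, ∑ l, Complex.normSq (A k l) := by
  have h := trace_eq_sum_eigen (Matrix.isHermitian_conjTranspose_mul_self A)
  have h2 := congrArg Complex.re h
  rw [Complex.re_sum] at h2
  simp only [Complex.ofReal_re] at h2
  rw [← h2]
  unfold Matrix.trace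
  rw [Complex.re_sum]
  rw [Finset.sum_comm]
  refine Finset.sum_congr rfl fun l _ => ?_
  simp only [Matrix.diag_apply, Matrix.mul_apply, Matrix.conjTranspose_apply, Complex.re_sum]
  refine Finset.sum_congr rfl fun k _ => ?_
  rw [Complex.star_def, ← Complex.normSq_eq_conj_mul_self]
  exact Complex.ofReal_re _

lemma entry_le_schattenNorm {u : ℝ≥0∞} (hu : u ≠ 0) {n : ℕ}
    (A : Matrix (Fin n) (Fin n) ℂ) (k l : Fin n) :
    ‖A k l‖ ≤ schattenNorm u A := by
  set S := schattenNorm u A with hS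
  have hS0 : 0 ≤ S := schattenNorm_nonneg u A
  have hev : ∀ i, (Matrix.isHermitian_conjTranspose_mul_self A).eigenvalues i ≤ S ^ 2 := by
    intro i
    rw [← sq_singularValues A i]
    exact pow_le_pow_left₀ (singularValues_nonneg A i) (singularValue_le_schattenNorm hu A i) 2
  have hdiag := diag_re_le (Matrix.isHermitian_conjTranspose_mul_self A) hev l
  have hentry : ‖A k l‖ ^ 2 ≤ ((A.conjTranspose * A) l l).re := by
    have : ((A.conjTranspose * A) l l).re = ∑ j, Complex.normSq (A j l) := by
      simp only [Matrix.mul_apply, Matrix.conjTranspose_apply, Complex.re_sum]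
      refine Finset.sum_congr rfl fun j _ => ?_
      rw [Complex.star_def, ← Complex.normSq_eq_conj_mul_self]
      exact Complex.ofReal_re _
    rw [this, Complex.sq_norm]
    exact Finset.single_le_sum (f := fun j => Complex.normSq (A j l))
      (fun j _ => Complex.normSq_nonneg _) (Finset.mem_univ k)
  have : ‖A k l‖ ^ 2 ≤ S ^ 2 := le_trans hentry hdiag
  calc ‖A k l‖ = Real.sqrt (‖A k l‖ ^ 2) := (Real.sqrt_sq (norm_nonneg _)).symm
    _ ≤ Real.sqrt (S ^ 2) := Real.sqrt_le_sqrt this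
    _ = S := Real.sqrt_sq hS0

lemma schattenNorm_le_frob {v : ℝ≥0∞} (hv : 1 ≤ v) {n : ℕ}
    (A : Matrix (Fin n) (Fin n) ℂ) :
    schattenNorm v A ≤ Real.sqrt n * Real.sqrt (∑ k, ∑ l, Complex.normSq (A k l)) := by
  have h1 : schattenNorm v A ≤ ∑ i, singularValues A i := by
    have := lpsum_le_sum v hv (singularValues A)
    simpa [schattenNorm, abs_of_nonneg (singularValues_nonneg A _)] using this
  have hCS : (∑ i, singularValues A i) ^ 2
      ≤ (n : ℝ) * ∑ i, singularValues A i ^ 2 := by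
    have := Finset.sum_mul_sq_le_sq_mul_sq Finset.univ (fun _ : Fin n => (1:ℝ))
      (singularValues A)
    simpa [Finset.card_univ] using this
  have h2 : ∑ i, singularValues A i ^ 2 = ∑ k, ∑ l, Complex.normSq (A k l) := by
    rw [← sum_eigen_eq A]
    exact Finset.sum_congr rfl fun i _ => sq_singularValues A i
  calc schattenNorm v A ≤ ∑ i, singularValues A i := h1
    _ = Real.sqrt ((∑ i, singularValues A i) ^ 2) :=
        (Real.sqrt_sq (Finset.sum_nonneg fun i _ => singularValues_nonneg A i)).symm
    _ ≤ Real.sqrt ((n : ℝ) * ∑ i, singularValues A i ^ 2) := Real.sqrt_le_sqrt hCS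
    _ = Real.sqrt n * Real.sqrt (∑ i, singularValues A i ^ 2) := Real.sqrt_mul (by positivity) _
    _ = _ := by rw [h2]

lemma trace_ite {n : ℕ} (l : Fin n) (c : ℂ) :
    Matrix.trace (fun p q => if p = l ∧ q = l then c else 0 : Matrix (Fin n) (Fin n) ℂ)
      = c := by
  unfold Matrix.trace
  show ∑ i, (if i = l ∧ i = l then c else 0) = c
  simp only [and_self]
  rw [Finset.sum_ite_eq' Finset.univ l (fun _ => c), if_pos (Finset.mem_univ l)]

lemma schatten_rank_one {u : ℝ≥0∞} (hu : u ≠ 0) {n : ℕ} (A : Matrix (Fin n) (Fin n) ℂ)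
    (l : Fin n) (t : ℝ) (ht : 0 ≤ t)
    (hA : A.conjTranspose * A = fun p q => if p = l ∧ q = l then (t:ℂ) else 0) :
    schattenNorm u A = Real.sqrt t := by
  set lam := (Matrix.isHermitian_conjTranspose_mul_self A).eigenvalues with hlamdef
  have hsv_i : ∀ i, singularValues A i = Real.sqrt (lam i) := fun i => rfl
  have hsch : schattenNorm u A = lpsum u (singularValues A) := rfl
  have hpos : ∀ i, 0 ≤ lam i := eigen_nonneg A
  have htr : (A.conjTranspose * A).trace = (t : ℂ) := by rw [hA, trace_ite]
  have hsum : ∑ i, lam i = t := by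
    have h2 : ((∑ i, lam i : ℝ) : ℂ) = (t:ℂ) := by
      push_cast
      rw [← trace_eq_sum_eigen (Matrix.isHermitian_conjTranspose_mul_self A), htr]
    exact_mod_cast h2
  have hMM : (A.conjTranspose * A) * (A.conjTranspose * A)
      = fun p q => if p = l ∧ q = l then ((t:ℂ) * t) else 0 := by
    rw [hA]
    funext p q
    erw [Matrix.mul_apply]
    rw [Finset.sum_eq_single l]
    · by_cases hp : p = l <;> by_cases hq : q = l <;> simp [hp, hq]
    · intro b _ hb
      simp [hb]
    · intro h
      exact absurd (Finset.mem_univ l) h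
  have htr2 : ∑ i, lam i * lam i = t * t := by
    have h := trace_sq_eq_sum_eigen_sq (Matrix.isHermitian_conjTranspose_mul_self A)
    rw [hMM, trace_ite] at h
    have h2 : ((t:ℝ):ℂ) * ((t:ℝ):ℂ) = ((∑ i, lam i * lam i : ℝ) : ℂ) := by
      push_cast
      rw [h]
    exact_mod_cast h2.symm
  have hle : ∀ i, lam i ≤ t := fun i =>
    le_trans (Finset.single_le_sum (fun j _ => hpos j) (Finset.mem_univ i)) (le_of_eq hsum)
  have hzero : ∀ i ∈ Finset.univ, lam i * (t - lam i) = 0 := by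
    apply (Finset.sum_eq_zero_iff_of_nonneg
      (fun i _ => mul_nonneg (hpos i) (sub_nonneg.mpr (hle i)))).mp
    have : ∑ i, lam i * (t - lam i) = t * (∑ i, lam i) - ∑ i, lam i * lam i := by
      rw [Finset.mul_sum, ← Finset.sum_sub_distrib]
      exact Finset.sum_congr rfl fun i _ => by ring
    rw [this, hsum, htr2]
    ring
  have hdichot : ∀ i, lam i = 0 ∨ lam i = t := by
    intro i
    rcases mul_eq_zero.mp (hzero i (Finset.mem_univ i)) with h | h
    · exact Or.inl h
    · exact Or.inr (by linarith [sub_eq_zero.mp h])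
  rcases eq_or_lt_of_le ht with ht0 | htpos
  · have hl0 : ∀ i, lam i = 0 := fun i => by
      rcases hdichot i with h | h
      · exact h
      · rw [h, ← ht0]
    have hz : singularValues A = fun _ : Fin n => (0:ℝ) := by
      funext i
      rw [hsv_i i, hl0 i, Real.sqrt_zero]
    rw [hsch, hz, lpsum_zero u hu, ← ht0, Real.sqrt_zero]
  · obtain ⟨i₀, hi₀⟩ : ∃ i₀, lam i₀ = t := by
      by_contra hcon
      push_neg at hcon
      have hall : ∀ i, lam i = 0 := fun i => (hdichot i).resolve_right (hcon i)
      rw [Finset.sum_congr rfl (fun i _ => hall i), Finset.sum_const, smul_zero] at hsum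
      exact htpos.ne hsum
    have hsv : singularValues A = fun i => if i = i₀ then Real.sqrt t else 0 := by
      funext i
      by_cases h : i = i₀
      · subst h
        rw [hsv_i i, hi₀, if_pos rfl]
      · rw [if_neg h, hsv_i i]
        rcases hdichot i with h0 | hti
        · rw [h0, Real.sqrt_zero]
        · exfalso
          have hps : lam i + lam i₀ = ∑ j ∈ ({i, i₀} : Finset (Fin n)), lam j :=
            (Finset.sum_pair h).symm
          have hss : ∑ j ∈ ({i, i₀} : Finset (Fin n)), lam j ≤ ∑ j, lam j :=
            Finset.sum_le_sum_of_subset_of_nonneg (Finset.subset_univ _)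
              (fun j _ _ => hpos j)
          rw [hsum] at hss
          rw [hti, hi₀] at hps
          linarith
    rw [hsch, hsv, lpsum_ite u hu i₀ _ (Real.sqrt_nonneg t)]

def colMat {n : ℕ} (l : Fin n) (c : Fin n → ℂ) : Matrix (Fin n) (Fin n) ℂ :=
  Matrix.of fun i j => if j = l then c i else 0

lemma colMat_conj_mul {n : ℕ} (l : Fin n) (c : Fin n → ℂ) :
    (colMat l c).conjTranspose * colMat l c
      = fun p q => if p = l ∧ q = l then ((∑ k, Complex.normSq (c k) : ℝ) : ℂ) else 0 := by
  funext p q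
  simp only [Matrix.mul_apply, Matrix.conjTranspose_apply, colMat, Matrix.of_apply]
  by_cases hp : p = l
  · by_cases hq : q = l
    · simp only [hp, hq, and_self, if_true, if_pos rfl]
      push_cast
      refine Finset.sum_congr rfl fun k _ => ?_
      rw [Complex.star_def, ← Complex.normSq_eq_conj_mul_self]
    · simp [hp, hq]
  · simp [hp]

lemma schatten_colMat {u : ℝ≥0∞} (hu : u ≠ 0) {n : ℕ} (l : Fin n) (c : Fin n → ℂ) :
    schattenNorm u (colMat l c) = Real.sqrt (∑ k, Complex.normSq (c k)) :=
  schatten_rank_one hu _ l _ (Finset.sum_nonneg fun k _ => Complex.normSq_nonneg _)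
    (colMat_conj_mul l c)

lemma stdBasis_eq_colMat {n : ℕ} (k l : Fin n) :
    Matrix.single k l (1:ℂ) = colMat l (fun i => if i = k then 1 else 0) := by
  funext p q
  show (if k = p ∧ l = q then (1:ℂ) else 0) = (if q = l then (if p = k then 1 else 0) else 0)
  by_cases hp : k = p <;> by_cases hq : l = q
  · simp [hp, hq]
  · rw [if_neg (fun h => hq h.2), if_neg (fun h : q = l => hq h.symm)]
  · rw [if_neg (fun h => hp h.1), if_pos hq.symm, if_neg (fun h : p = k => hp h.symm)]
  · rw [if_neg (fun h => hp h.1), if_neg (fun h : q = l => hq h.symm)]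

lemma schatten_stdBasis {u : ℝ≥0∞} (hu : u ≠ 0) {n : ℕ} (k l : Fin n) :
    schattenNorm u (Matrix.single k l (1:ℂ)) = 1 := by
  rw [stdBasis_eq_colMat, schatten_colMat hu]
  have : ∀ i : Fin n, Complex.normSq (if i = k then (1:ℂ) else 0)
      = if i = k then (1:ℝ) else 0 := fun i => by
    by_cases h : i = k <;> simp [h]
  rw [Finset.sum_congr rfl fun i _ => this i,
    Finset.sum_ite_eq' Finset.univ k (fun _ => (1:ℝ)), if_pos (Finset.mem_univ k),
    Real.sqrt_one]

lemma schattenNorm_zero {u : ℝ≥0∞} (hu : u ≠ 0) {n : ℕ} (hn : 0 < n) :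
    schattenNorm u (0 : Matrix (Fin n) (Fin n) ℂ) = 0 := by
  have h0 : (0 : Matrix (Fin n) (Fin n) ℂ) = colMat ⟨0, hn⟩ (fun _ => 0) := by
    funext p q
    simp [colMat]
  rw [h0, schatten_colMat hu]
  simp

lemma map_matrix_expand {n : ℕ} (f : Matrix (Fin n) (Fin n) ℂ →ₗ[ℂ] ℂ)
    (x : Matrix (Fin n) (Fin n) ℂ) :
    f x = ∑ k, ∑ l, x k l * f (Matrix.single k l 1) := by
  conv_lhs => rw [Matrix.matrix_eq_sum_single x]
  rw [map_sum]
  refine Finset.sum_congr rfl fun k _ => ?_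
  rw [map_sum]
  refine Finset.sum_congr rfl fun l _ => ?_
  rw [show Matrix.single k l (x k l) = x k l • Matrix.single k l 1 from by
    rw [Matrix.smul_single, smul_eq_mul, mul_one], map_smul, smul_eq_mul]

lemma norm_map_le {n : ℕ} (f : Matrix (Fin n) (Fin n) ℂ →ₗ[ℂ] ℂ)
    (x : Matrix (Fin n) (Fin n) ℂ) :
    ‖f x‖ ≤ ∑ k, ∑ l, ‖x k l‖ * ‖f (Matrix.single k l 1)‖ := by
  rw [map_matrix_expand f x]
  refine le_trans (norm_sum_le _ _) (Finset.sum_le_sum fun k _ => ?_)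
  refine le_trans (norm_sum_le _ _) (Finset.sum_le_sum fun l _ => ?_)
  rw [norm_mul]

lemma dualNorm_bddAbove {u : ℝ≥0∞} (hu : u ≠ 0) {n : ℕ}
    (f : Matrix (Fin n) (Fin n) ℂ →ₗ[ℂ] ℂ) :
    BddAbove {t | ∃ x, schattenNorm u x ≤ 1 ∧ t = ‖f x‖} := by
  refine ⟨∑ k, ∑ l, ‖f (Matrix.single k l 1)‖, fun t ht => ?_⟩
  obtain ⟨x, hx, rfl⟩ := ht
  refine le_trans (norm_map_le f x) (Finset.sum_le_sum fun k _ =>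
    Finset.sum_le_sum fun l _ => ?_)
  calc ‖x k l‖ * ‖f (Matrix.single k l 1)‖
      ≤ 1 * ‖f (Matrix.single k l 1)‖ := by
        apply mul_le_mul_of_nonneg_right _ (norm_nonneg _)
        exact le_trans (entry_le_schattenNorm hu x k l) hx
    _ = _ := one_mul _

lemma dualNorm_nonneg {n : ℕ} (N : Matrix (Fin n) (Fin n) ℂ → ℝ)
    (f : Matrix (Fin n) (Fin n) ℂ →ₗ[ℂ] ℂ) : 0 ≤ dualNorm N f :=
  Real.sSup_nonneg fun t ht => by
    obtain ⟨x, _, rfl⟩ := ht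
    exact norm_nonneg _

lemma apply_le_dualNorm {u : ℝ≥0∞} (hu : u ≠ 0) {n : ℕ}
    (f : Matrix (Fin n) (Fin n) ℂ →ₗ[ℂ] ℂ) (x : Matrix (Fin n) (Fin n) ℂ)
    (hx : schattenNorm u x ≤ 1) : ‖f x‖ ≤ dualNorm (schattenNorm u) f :=
  le_csSup (dualNorm_bddAbove hu f) ⟨x, hx, rfl⟩

lemma weak2_nonneg {n : ℕ} (N : Matrix (Fin n) (Fin n) ℂ → ℝ) {m : ℕ}
    (x : Fin m → Matrix (Fin n) (Fin n) ℂ) : 0 ≤ weak2 N x :=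
  Real.sSup_nonneg fun t ht => by
    obtain ⟨f, _, rfl⟩ := ht
    exact lpsum_nonneg _ _

lemma weak2_bddAbove {u : ℝ≥0∞} (hu : u ≠ 0) {n : ℕ} {m : ℕ}
    (x : Fin m → Matrix (Fin n) (Fin n) ℂ) :
    BddAbove {t | ∃ f : Matrix (Fin n) (Fin n) ℂ →ₗ[ℂ] ℂ,
      dualNorm (schattenNorm u) f ≤ 1 ∧ t = lpsum 2 fun j => ‖f (x j)‖} := by
  refine ⟨lpsum 2 (fun j => ∑ k, ∑ l, ‖x j k l‖), fun t ht => ?_⟩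
  obtain ⟨f, hf, rfl⟩ := ht
  apply lpsum_mono
  intro j
  rw [abs_norm]
  have h1 : ‖f (x j)‖ ≤ ∑ k, ∑ l, ‖x j k l‖ := by
    refine le_trans (norm_map_le f (x j)) (Finset.sum_le_sum fun k _ =>
      Finset.sum_le_sum fun l _ => ?_)
    calc ‖x j k l‖ * ‖f (Matrix.single k l 1)‖ ≤ ‖x j k l‖ * 1 := by
          apply mul_le_mul_of_nonneg_left _ (norm_nonneg _)
          exact le_trans (apply_le_dualNorm hu f _ (le_of_eq (schatten_stdBasis hu k l))) hf
      _ = ‖x j k l‖ := mul_one _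
  refine le_trans h1 (le_abs_self _)

lemma le_weak2 {u : ℝ≥0∞} (hu : u ≠ 0) {n : ℕ} {m : ℕ}
    (x : Fin m → Matrix (Fin n) (Fin n) ℂ) (f : Matrix (Fin n) (Fin n) ℂ →ₗ[ℂ] ℂ)
    (hf : dualNorm (schattenNorm u) f ≤ 1) :
    lpsum 2 (fun j => ‖f (x j)‖) ≤ weak2 (schattenNorm u) x :=
  le_csSup (weak2_bddAbove hu x) ⟨f, hf, rfl⟩

lemma sq_sum_le {n : ℕ} (g : Fin n → ℝ) :
    (∑ i, g i) ^ 2 ≤ (n:ℝ) * ∑ i, g i ^ 2 := by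
  have h := Finset.sum_mul_sq_le_sq_mul_sq Finset.univ (fun _ : Fin n => (1:ℝ)) g
  simpa [Finset.card_univ] using h

lemma sum_le_sqrt_mul {n : ℕ} (g : Fin n → ℝ) (hg : ∀ i, 0 ≤ g i) :
    ∑ i, g i ≤ Real.sqrt n * Real.sqrt (∑ i, g i ^ 2) := by
  calc ∑ i, g i = Real.sqrt ((∑ i, g i) ^ 2) :=
        (Real.sqrt_sq (Finset.sum_nonneg fun i _ => hg i)).symm
    _ ≤ Real.sqrt ((n:ℝ) * ∑ i, g i ^ 2) := Real.sqrt_le_sqrt (sq_sum_le g)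
    _ = _ := Real.sqrt_mul (by positivity) _

lemma dsum_le {n : ℕ} (b : Fin n → Fin n → ℝ) (hb : ∀ k l, 0 ≤ b k l) :
    ∑ k, ∑ l, b k l ≤ (n:ℝ) * Real.sqrt (∑ k, ∑ l, (b k l) ^ 2) := by
  have h1 : ∑ k, ∑ l, b k l ≤ Real.sqrt n * Real.sqrt (∑ k, (∑ l, b k l) ^ 2) :=
    sum_le_sqrt_mul _ (fun k => Finset.sum_nonneg fun l _ => hb k l)
  have h2 : ∑ k, (∑ l, b k l) ^ 2 ≤ (n:ℝ) * ∑ k, ∑ l, (b k l) ^ 2 := by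
    calc ∑ k, (∑ l, b k l) ^ 2 ≤ ∑ k, (n:ℝ) * ∑ l, (b k l) ^ 2 :=
          Finset.sum_le_sum fun k _ => sq_sum_le (b k)
      _ = (n:ℝ) * ∑ k, ∑ l, (b k l) ^ 2 := by rw [← Finset.mul_sum]
  calc ∑ k, ∑ l, b k l ≤ Real.sqrt n * Real.sqrt (∑ k, (∑ l, b k l) ^ 2) := h1
    _ ≤ Real.sqrt n * Real.sqrt ((n:ℝ) * ∑ k, ∑ l, (b k l) ^ 2) := by
        apply mul_le_mul_of_nonneg_left (Real.sqrt_le_sqrt h2) (Real.sqrt_nonneg _)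
    _ = Real.sqrt n * (Real.sqrt n * Real.sqrt (∑ k, ∑ l, (b k l) ^ 2)) := by
        rw [Real.sqrt_mul (by positivity)]
    _ = _ := by rw [← mul_assoc, Real.mul_self_sqrt (by positivity)]

def coordLM {n : ℕ} (k l : Fin n) : Matrix (Fin n) (Fin n) ℂ →ₗ[ℂ] ℂ where
  toFun A := A k l
  map_add' _ _ := rfl
  map_smul' _ _ := rfl

lemma dualNorm_coordLM_le_one {u : ℝ≥0∞} (hu : u ≠ 0) {n : ℕ} (k l : Fin n) :
    dualNorm (schattenNorm u) (coordLM k l) ≤ 1 := by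
  apply Real.sSup_le _ zero_le_one
  rintro t ⟨x, hx, rfl⟩
  exact le_trans (entry_le_schattenNorm hu x k l) hx

lemma entry_lpsum_le_weak2 {u : ℝ≥0∞} (hu : u ≠ 0) {n m : ℕ}
    (x : Fin m → Matrix (Fin n) (Fin n) ℂ) (k l : Fin n) :
    lpsum 2 (fun j => ‖x j k l‖) ≤ weak2 (schattenNorm u) x :=
  le_weak2 hu x (coordLM k l) (dualNorm_coordLM_le_one hu k l)

lemma frob_weak2 {u : ℝ≥0∞} (hu : u ≠ 0) {n m : ℕ}
    (x : Fin m → Matrix (Fin n) (Fin n) ℂ) :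
    lpsum 2 (fun j => Real.sqrt (∑ k, ∑ l, Complex.normSq (x j k l)))
      ≤ (n:ℝ) * weak2 (schattenNorm u) x := by
  set W := weak2 (schattenNorm u) x with hW
  have hW0 : 0 ≤ W := weak2_nonneg _ x
  have hkl : ∀ k l : Fin n, ∑ j, Complex.normSq (x j k l) ≤ W ^ 2 := by
    intro k l
    have h := entry_lpsum_le_weak2 hu x k l
    rw [lpsum_two_eq_sqrt] at h
    have hs : ∑ j, ‖x j k l‖ ^ 2 = ∑ j, Complex.normSq (x j k l) :=
      Finset.sum_congr rfl fun j _ => by rw [Complex.sq_norm]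
    rw [hs] at h
    calc ∑ j, Complex.normSq (x j k l)
        = Real.sqrt (∑ j, Complex.normSq (x j k l)) ^ 2 :=
          (Real.sq_sqrt (Finset.sum_nonneg fun j _ => Complex.normSq_nonneg _)).symm
      _ ≤ W ^ 2 := pow_le_pow_left₀ (Real.sqrt_nonneg _) h 2
  rw [lpsum_two_eq_sqrt]
  have h1 : ∑ j, (Real.sqrt (∑ k, ∑ l, Complex.normSq (x j k l))) ^ 2
      = ∑ j, ∑ k, ∑ l, Complex.normSq (x j k l) :=
    Finset.sum_congr rfl fun j _ => Real.sq_sqrt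
      (Finset.sum_nonneg fun k _ => Finset.sum_nonneg fun l _ => Complex.normSq_nonneg _)
  rw [h1]
  have h2 : ∑ j, ∑ k, ∑ l, Complex.normSq (x j k l)
      = ∑ k, ∑ l, ∑ j, Complex.normSq (x j k l) := by
    rw [Finset.sum_comm]
    exact Finset.sum_congr rfl fun k _ => Finset.sum_comm
  rw [h2]
  calc Real.sqrt (∑ k, ∑ l, ∑ j, Complex.normSq (x j k l))
      ≤ Real.sqrt (∑ k : Fin n, ∑ l : Fin n, W ^ 2) := by
        apply Real.sqrt_le_sqrt
        exact Finset.sum_le_sum fun k _ => Finset.sum_le_sum fun l _ => hkl k l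
    _ = Real.sqrt ((n:ℝ)^2 * W ^ 2) := by
        rw [Finset.sum_const, Finset.sum_const, Finset.card_univ, Fintype.card_fin]
        congr 1
        push_cast
        ring
    _ = (n:ℝ) * W := by
        rw [show (n:ℝ)^2 * W^2 = ((n:ℝ)*W)^2 from by ring]
        exact Real.sqrt_sq (by positivity)

lemma sqrt_nat_le (n : ℕ) : Real.sqrt n ≤ (n:ℝ) := by
  rcases Nat.eq_zero_or_pos n with h | h
  · subst h; simp
  · have h1 : (1:ℝ) ≤ n := by exact_mod_cast h
    calc Real.sqrt n ≤ Real.sqrt ((n:ℝ)^2) := Real.sqrt_le_sqrt (by nlinarith)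
      _ = (n:ℝ) := Real.sqrt_sq (by positivity)

lemma master {u v : ℝ≥0∞} (hu : u ≠ 0) (hv : 1 ≤ v) {n m : ℕ}
    (x : Fin m → Matrix (Fin n) (Fin n) ℂ) :
    lpsum 2 (fun j => schattenNorm v (x j)) ≤ (n:ℝ)^2 * weak2 (schattenNorm u) x := by
  set W := weak2 (schattenNorm u) x with hW
  have hW0 : 0 ≤ W := weak2_nonneg _ x
  set F : Fin m → ℝ := fun j => Real.sqrt (∑ k, ∑ l, Complex.normSq (x j k l)) with hF
  calc lpsum 2 (fun j => schattenNorm v (x j))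
      ≤ lpsum 2 (fun j => Real.sqrt n * F j) := by
        apply lpsum_mono
        intro j
        rw [abs_of_nonneg (schattenNorm_nonneg v _), abs_of_nonneg (by positivity)]
        exact schattenNorm_le_frob hv (x j)
    _ = Real.sqrt n * lpsum 2 F := lpsum_smul 2 (by norm_num) _ (Real.sqrt_nonneg _) F
    _ ≤ Real.sqrt n * ((n:ℝ) * W) := by
        apply mul_le_mul_of_nonneg_left (frob_weak2 hu x) (Real.sqrt_nonneg _)
    _ ≤ (n:ℝ) * ((n:ℝ) * W) := by
        apply mul_le_mul_of_nonneg_right (sqrt_nat_le n) (by positivity)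
    _ = (n:ℝ)^2 * W := by ring

lemma weak2_basis_le_one {u : ℝ≥0∞} (hu : u ≠ 0) {n : ℕ} (z : Fin n) :
    weak2 (schattenNorm u) (fun j : Fin n => Matrix.single j z (1:ℂ)) ≤ 1 := by
  apply Real.sSup_le _ zero_le_one
  rintro t ⟨f, hf, rfl⟩
  set a : Fin n → ℂ := fun j => f (Matrix.single j z 1) with ha
  have hteq : lpsum 2 (fun j => ‖f (Matrix.single j z (1:ℂ))‖)
      = Real.sqrt (∑ j, Complex.normSq (a j)) := by
    rw [lpsum_two_eq_sqrt]
    congr 1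
    exact Finset.sum_congr rfl fun j _ => by rw [Complex.sq_norm]
  rw [show (fun j => ‖f ((fun j : Fin n => Matrix.single j z (1:ℂ)) j)‖)
    = fun j => ‖f (Matrix.single j z (1:ℂ))‖ from rfl, hteq]
  set Ssum := ∑ j, Complex.normSq (a j) with hSsum
  have hSnn : 0 ≤ Ssum := Finset.sum_nonneg fun j _ => Complex.normSq_nonneg _
  rcases eq_or_lt_of_le hSnn with h0 | hpos
  · rw [← h0, Real.sqrt_zero]
    exact zero_le_one
  · set T := Real.sqrt Ssum with hT
    have hTpos : 0 < T := Real.sqrt_pos.mpr hpos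
    have hT2 : T ^ 2 = Ssum := Real.sq_sqrt hSnn
    set c : Fin n → ℂ := fun j => (starRingEnd ℂ) (a j) / (T:ℂ) with hc
    have hcj : ∀ j, Complex.normSq (c j) = Complex.normSq (a j) / Ssum := fun j => by
      rw [hc]
      rw [Complex.normSq_div, Complex.normSq_conj, Complex.normSq_ofReal, ← pow_two, hT2]
    have hnormc : ∑ j, Complex.normSq (c j) = 1 := by
      rw [Finset.sum_congr rfl fun j _ => hcj j, ← Finset.sum_div, ← hSsum,
        div_self hpos.ne']
    have hAnorm : schattenNorm u (colMat z c) ≤ 1 := by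
      rw [schatten_colMat hu, hnormc, Real.sqrt_one]
    have hcol : colMat z c = ∑ j, c j • Matrix.single j z (1:ℂ) := by
      funext p q
      rw [Matrix.sum_apply]
      simp only [Matrix.smul_apply, Matrix.single, Matrix.of_apply, smul_eq_mul,
        mul_ite, mul_one, mul_zero]
      show (if q = z then c p else 0) = ∑ j, if j = p ∧ z = q then c j else 0
      by_cases hq : z = q
      · subst hq
        rw [if_pos rfl]
        simp only [eq_self_iff_true, and_true]
        rw [Finset.sum_ite_eq' Finset.univ p c, if_pos (Finset.mem_univ p)]
      · rw [if_neg (fun h => hq h.symm)]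
        exact (Finset.sum_eq_zero fun j _ => if_neg (fun h => hq h.2)).symm
    have hfa : f (colMat z c) = ((Ssum / T : ℝ) : ℂ) := by
      rw [hcol, map_sum]
      simp only [map_smul, smul_eq_mul]
      have hterm : ∀ j, c j * a j = ((Complex.normSq (a j) / T : ℝ) : ℂ) := fun j => by
        rw [hc]
        show (starRingEnd ℂ) (a j) / (T:ℂ) * a j = _
        rw [div_mul_eq_mul_div, ← Complex.normSq_eq_conj_mul_self, Complex.ofReal_div]
      calc ∑ j, c j * a j = ∑ j, ((Complex.normSq (a j) / T : ℝ) : ℂ) :=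
            Finset.sum_congr rfl fun j _ => hterm j
        _ = ((∑ j, Complex.normSq (a j) / T : ℝ) : ℂ) := (Complex.ofReal_sum _ _).symm
        _ = _ := by rw [← Finset.sum_div, ← hSsum]
    have hnormfa : ‖f (colMat z c)‖ = T := by
      rw [hfa]
      rw [Complex.norm_real, Real.norm_eq_abs, abs_of_nonneg (div_nonneg hSnn hTpos.le),
        hT, Real.div_sqrt]
    calc T = ‖f (colMat z c)‖ := hnormfa.symm
      _ ≤ dualNorm (schattenNorm u) f := apply_le_dualNorm hu f _ hAnorm
      _ ≤ 1 := hf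

lemma mixing_mem {u v s : ℝ≥0∞} (hu : u ≠ 0) (hv0 : v ≠ 0) (hv : 1 ≤ v) (hs : s ≠ 0)
    {n : ℕ} (k m : ℕ) (y : Fin k → (Matrix (Fin n) (Fin n) ℂ →ₗ[ℂ] ℂ))
    (x : Fin m → Matrix (Fin n) (Fin n) ℂ) :
    lpsum 2 (fun j => lpsum s fun i => ‖(y i) (x j)‖) ≤
      (n:ℝ)^2 * lpsum s (fun i => dualNorm (schattenNorm v) (y i))
        * weak2 (schattenNorm u) x := by
  set L := lpsum s (fun i => dualNorm (schattenNorm v) (y i)) with hL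
  have hL0 : 0 ≤ L := lpsum_nonneg _ _
  set W := weak2 (schattenNorm u) x with hW
  have hW0 : 0 ≤ W := weak2_nonneg _ x
  set C : Fin m → ℝ := fun j => ∑ k', ∑ l, ‖x j k' l‖ with hC
  have hC0 : ∀ j, 0 ≤ C j := fun j =>
    Finset.sum_nonneg fun k' _ => Finset.sum_nonneg fun l _ => norm_nonneg _
  have hinner : ∀ j, lpsum s (fun i => ‖(y i) (x j)‖) ≤ C j * L := by
    intro j
    calc lpsum s (fun i => ‖(y i) (x j)‖)
        ≤ lpsum s (fun i => C j * dualNorm (schattenNorm v) (y i)) := by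
          apply lpsum_mono
          intro i
          rw [abs_norm, abs_of_nonneg (mul_nonneg (hC0 j) (dualNorm_nonneg _ _))]
          calc ‖(y i) (x j)‖
              ≤ ∑ k', ∑ l, ‖x j k' l‖ * ‖(y i) (Matrix.single k' l 1)‖ :=
                norm_map_le _ _
            _ ≤ ∑ k', ∑ l, ‖x j k' l‖ * dualNorm (schattenNorm v) (y i) := by
                refine Finset.sum_le_sum fun k' _ => Finset.sum_le_sum fun l _ => ?_
                exact mul_le_mul_of_nonneg_left
                  (apply_le_dualNorm hv0 _ _ (le_of_eq (schatten_stdBasis hv0 _ _)))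
                  (norm_nonneg _)
            _ = C j * dualNorm (schattenNorm v) (y i) := by
                show _ = (∑ k', ∑ l, ‖x j k' l‖) * dualNorm (schattenNorm v) (y i)
                rw [Finset.sum_mul]
                exact Finset.sum_congr rfl fun k' _ => (Finset.sum_mul _ _ _).symm
      _ = C j * L := lpsum_smul s hs (C j) (hC0 j) _
  calc lpsum 2 (fun j => lpsum s fun i => ‖(y i) (x j)‖)
      ≤ lpsum 2 (fun j => L * C j) := by
        apply lpsum_mono
        intro j
        rw [abs_of_nonneg (lpsum_nonneg _ _), abs_of_nonneg (mul_nonneg hL0 (hC0 j)),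
          mul_comm]
        exact hinner j
    _ = L * lpsum 2 C := lpsum_smul 2 (by norm_num) L hL0 C
    _ ≤ L * ((n:ℝ) * lpsum 2 (fun j => Real.sqrt (∑ k', ∑ l, Complex.normSq (x j k' l)))) := by
        apply mul_le_mul_of_nonneg_left _ hL0
        calc lpsum 2 C
            ≤ lpsum 2 (fun j => (n:ℝ) * Real.sqrt (∑ k', ∑ l, Complex.normSq (x j k' l))) := by
              apply lpsum_mono
              intro j
              rw [abs_of_nonneg (hC0 j), abs_of_nonneg (by positivity)]
              have hd := dsum_le (fun k' l => ‖x j k' l‖) (fun _ _ => norm_nonneg _)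
              have hsq : (∑ k', ∑ l, ‖x j k' l‖ ^ 2)
                  = ∑ k', ∑ l, Complex.normSq (x j k' l) :=
                Finset.sum_congr rfl fun k' _ => Finset.sum_congr rfl fun l _ => by
                  rw [Complex.sq_norm]
              rw [hsq] at hd
              exact hd
          _ = (n:ℝ) * lpsum 2 (fun j => Real.sqrt (∑ k', ∑ l, Complex.normSq (x j k' l))) :=
              lpsum_smul 2 (by norm_num) _ (by positivity) _
    _ ≤ L * ((n:ℝ) * ((n:ℝ) * W)) := by
        apply mul_le_mul_of_nonneg_left _ hL0
        exact mul_le_mul_of_nonneg_left (frob_weak2 hu x) (by positivity)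
    _ = (n:ℝ)^2 * L * W := by ring

end Aux

open Aux

/-- Formula (16): for all `1 ≤ u, v ≤ ∞` and `2 ≤ r ≤ ∞`,
`n^{1/r} ≤ π_{r,2}(id : S_u^n → S_v^n)`, and consequently for all `2 ≤ s ≤ ∞`,
`n^{1/2 − 1/s} ≤ μ_{s,2}(id : S_u^n → S_v^n)`. -/
theorem schatten_lower_bound (u v r : ℝ≥0∞) (hu1 : 1 ≤ u) (hv1 : 1 ≤ v) (hr2 : 2 ≤ r)
    (n : ℕ) (hn : 0 < n) :
    (n : ℝ) ^ (1 / r.toReal) ≤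
      summingNorm r (schattenNorm u) (schattenNorm v)
        (LinearMap.id : Matrix (Fin n) (Fin n) ℂ →ₗ[ℂ] Matrix (Fin n) (Fin n) ℂ) ∧
    ∀ s : ℝ≥0∞, 2 ≤ s →
      (n : ℝ) ^ (1 / 2 - 1 / s.toReal) ≤
        mixingNorm s (schattenNorm u) (schattenNorm v)
          (LinearMap.id : Matrix (Fin n) (Fin n) ℂ →ₗ[ℂ] Matrix (Fin n) (Fin n) ℂ) := by
  have hu0 : u ≠ 0 := ((zero_lt_one).trans_le hu1).ne'
  have hv0 : v ≠ 0 := ((zero_lt_one).trans_le hv1).ne'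
  have hr0 : r ≠ 0 := ((by norm_num : (0:ℝ≥0∞) < 2).trans_le hr2).ne'
  set z : Fin n := ⟨0, hn⟩ with hz
  set e : Fin n → Matrix (Fin n) (Fin n) ℂ := fun j => Matrix.single j z 1 with he
  have hweak : weak2 (schattenNorm u) e ≤ 1 := weak2_basis_le_one hu0 z
  have hnpos : (0:ℝ) < n := by exact_mod_cast hn
  constructor
  · apply le_csInf
    · refine ⟨(n:ℝ)^2, by positivity, fun m x => ?_⟩
      simp only [LinearMap.id_coe, id_eq]
      exact le_trans (lpsum_le_lpsum_two r hr2 _) (master hu0 hv1 x)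
    · rintro ρ ⟨hρ0, hρ⟩
      have h := hρ n e
      simp only [LinearMap.id_coe, id_eq] at h
      have hones : (fun j : Fin n => schattenNorm v (e j)) = fun _ => 1 :=
        funext fun j => schatten_stdBasis hv0 j z
      rw [hones, lpsum_const_one r hn] at h
      calc (n:ℝ)^(1/r.toReal) ≤ ρ * weak2 (schattenNorm u) e := h
        _ ≤ ρ * 1 := mul_le_mul_of_nonneg_left hweak hρ0
        _ = ρ := mul_one ρ
  · intro s hs2
    have hs0 : s ≠ 0 := ((by norm_num : (0:ℝ≥0∞) < 2).trans_le hs2).ne'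
    apply le_csInf
    · refine ⟨(n:ℝ)^2, by positivity, fun k m y x => ?_⟩
      simp only [LinearMap.id_coe, id_eq]
      exact mixing_mem hu0 hv0 hv1 hs0 k m y x
    · rintro c ⟨hc0, hc⟩
      have h := hc n n (fun i => coordLM i z) e
      simp only [LinearMap.id_coe, id_eq] at h
      have hinner : ∀ j : Fin n, (fun i : Fin n => ‖coordLM i z (e j)‖)
          = fun i => if i = j then (1:ℝ) else 0 := by
        intro j
        funext i
        show ‖(if j = i ∧ z = z then (1:ℂ) else 0)‖ = _
        by_cases hij : i = j
        · rw [if_pos ⟨hij.symm, rfl⟩, if_pos hij, norm_one]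
        · rw [if_neg (fun hcon => hij hcon.1.symm), if_neg hij, norm_zero]
      have hLHS : (fun j : Fin n => lpsum s fun i => ‖coordLM i z (e j)‖)
          = fun _ : Fin n => 1 := by
        funext j
        rw [show (fun i : Fin n => ‖coordLM i z (e j)‖)
          = fun i => if i = j then (1:ℝ) else 0 from hinner j]
        exact lpsum_ite s hs0 j 1 zero_le_one
      rw [hLHS, lpsum_const_one 2 hn] at h
      have h2 : ((2:ℝ≥0∞)).toReal = (2:ℝ) := by norm_num
      rw [h2] at h
      have hD : lpsum s (fun i => dualNorm (schattenNorm v) (coordLM i z))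
          ≤ (n:ℝ)^(1/s.toReal) := by
        calc lpsum s (fun i => dualNorm (schattenNorm v) (coordLM i z))
            ≤ lpsum s (fun _ : Fin n => 1) := by
              apply lpsum_mono
              intro i
              rw [abs_of_nonneg (dualNorm_nonneg _ _), abs_one]
              exact dualNorm_coordLM_le_one hv0 i z
          _ = (n:ℝ)^(1/s.toReal) := lpsum_const_one s hn
      have hfin : (n:ℝ)^((1:ℝ)/2) ≤ c * (n:ℝ)^(1/s.toReal) := by
        calc (n:ℝ)^((1:ℝ)/2)
            ≤ c * lpsum s (fun i => dualNorm (schattenNorm v) (coordLM i z))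
              * weak2 (schattenNorm u) e := h
          _ ≤ c * lpsum s (fun i => dualNorm (schattenNorm v) (coordLM i z)) * 1 :=
              mul_le_mul_of_nonneg_left hweak
                (mul_nonneg hc0 (lpsum_nonneg _ _))
          _ = c * lpsum s (fun i => dualNorm (schattenNorm v) (coordLM i z)) := mul_one _
          _ ≤ c * (n:ℝ)^(1/s.toReal) := mul_le_mul_of_nonneg_left hD hc0
      rw [Real.rpow_sub hnpos, div_le_iff₀ (Real.rpow_pos_of_pos hnpos _)]
      exact hfin
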